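/- Let k ≥ 1 and let A be a real 2k×2k matrix. If F·A·Fᵀ = A holds for every block-orthogonal matrix F ∈ ℝ^{2k×2k}, then there exist real numbers α and β such that, in k×k blocks, A = [[α·I, β·I],[β·I, α·I]], where I is the k×k identity matrix. -/
import Mathlib


open Matrix

/-- A matrix `E` is orthogonal if `E·Eᵀ = Eᵀ·E = 1`. -/
def IsOrthoMat {m : Type*} [Fintype m] [DecidableEq m] (E : Matrix m m ℝ) : Prop :=
  E * Eᵀ = 1 ∧ Eᵀ * E = 1

/-- A `2k×2k` matrix `F` is block-orthogonal if, for some orthogonal `k×k` matrix `E₀`,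
either `F = [[E₀,0],[0,E₀]]` or `F = [[0,E₀],[E₀,0]]` in `k×k` blocks. -/
def IsBlockOrthoMat {k : ℕ} (F : Matrix (Fin k ⊕ Fin k) (Fin k ⊕ Fin k) ℝ) : Prop :=
  ∃ E₀ : Matrix (Fin k) (Fin k) ℝ, IsOrthoMat E₀ ∧
    (F = Matrix.fromBlocks E₀ 0 0 E₀ ∨ F = Matrix.fromBlocks 0 E₀ E₀ 0)

lemma perm_ortho {k : ℕ} (σ : Equiv.Perm (Fin k)) :
    IsOrthoMat (σ.toPEquiv.toMatrix : Matrix (Fin k) (Fin k) ℝ) := by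
  have ht : (σ.toPEquiv.toMatrix : Matrix (Fin k) (Fin k) ℝ)ᵀ = σ.symm.toPEquiv.toMatrix := by
    rw [Equiv.toPEquiv_symm, PEquiv.toMatrix_symm]
  constructor
  · rw [ht, ← PEquiv.toMatrix_trans, ← Equiv.toPEquiv_trans]
    simp
  · rw [ht, ← PEquiv.toMatrix_trans, ← Equiv.toPEquiv_trans]
    simp

lemma sign_ortho {k : ℕ} (i : Fin k) :
    IsOrthoMat (diagonal (fun j => if j = i then (-1 : ℝ) else 1)) := by
  have hd : (diagonal (fun j => if j = i then (-1 : ℝ) else 1))ᵀ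
      = diagonal (fun j => if j = i then (-1 : ℝ) else 1) := diagonal_transpose _
  have hsq : diagonal (fun j => if j = i then (-1 : ℝ) else 1) *
      diagonal (fun j => if j = i then (-1 : ℝ) else 1) = 1 := by
    rw [diagonal_mul_diagonal]
    have he : (fun j => (if j = i then (-1:ℝ) else 1) * (if j = i then (-1:ℝ) else 1))
        = fun _ => (1:ℝ) := by
      funext j; by_cases hj : j = i <;> simp [hj]
    rw [he, diagonal_one]
  exact ⟨by rw [hd]; exact hsq, by rw [hd]; exact hsq⟩

lemma scalar_of_conj {k : ℕ} (hk : 1 ≤ k) (M : Matrix (Fin k) (Fin k) ℝ)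
    (hM : ∀ E : Matrix (Fin k) (Fin k) ℝ, IsOrthoMat E → E * M * Eᵀ = M) :
    ∃ c : ℝ, M = c • 1 := by
  have hk0 : 0 < k := hk
  -- off-diagonal zero
  have hoff : ∀ i j, i ≠ j → M i j = 0 := by
    intro i j hij
    set d : Fin k → ℝ := fun l => if l = i then (-1 : ℝ) else 1 with hd
    have := hM _ (sign_ortho i)
    rw [diagonal_transpose] at this
    have h2 := congrFun (congrFun this i) j
    rw [mul_diagonal, diagonal_mul] at h2
    have hji : j ≠ i := fun hh => hij hh.symm
    simp [hji] at h2
    linarith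
  -- diagonal entries equal
  have hdiag : ∀ i, M i i = M ⟨0, hk0⟩ ⟨0, hk0⟩ := by
    intro i
    set σ := Equiv.swap i (⟨0, hk0⟩ : Fin k) with hσ
    have := hM _ (perm_ortho σ)
    have ht : (σ.toPEquiv.toMatrix : Matrix (Fin k) (Fin k) ℝ)ᵀ = σ.symm.toPEquiv.toMatrix := by
      rw [Equiv.toPEquiv_symm, PEquiv.toMatrix_symm]
    rw [ht, PEquiv.toMatrix_toPEquiv_mul, PEquiv.mul_toMatrix_toPEquiv] at this
    have h2 := congrFun (congrFun this (⟨0, hk0⟩ : Fin k)) (⟨0, hk0⟩ : Fin k)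
    simp only [submatrix_apply, id, Equiv.symm_symm, hσ, Equiv.swap_apply_right] at h2
    exact h2
  refine ⟨M ⟨0, hk0⟩ ⟨0, hk0⟩, ?_⟩
  ext i j
  by_cases hij : i = j
  · subst hij; simp [hdiag i]
  · simp [hoff i j hij, hij]

lemma blocks_inj {k : ℕ} {a b c d a' b' c' d' : Matrix (Fin k) (Fin k) ℝ}
    (hh : fromBlocks a b c d = fromBlocks a' b' c' d') :
    a = a' ∧ b = b' ∧ c = c' ∧ d = d' :=
  ⟨by simpa using congrArg Matrix.toBlocks₁₁ hh,
   by simpa using congrArg Matrix.toBlocks₁₂ hh,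
   by simpa using congrArg Matrix.toBlocks₂₁ hh,
   by simpa using congrArg Matrix.toBlocks₂₂ hh⟩

/-- If `F·A·Fᵀ = A` for every block-orthogonal `F`, then, in `k×k` blocks,
`A = [[α·I, β·I],[β·I, α·I]]` for some reals `α, β`. -/
theorem stmt1 (k : ℕ) (hk : 1 ≤ k) (A : Matrix (Fin k ⊕ Fin k) (Fin k ⊕ Fin k) ℝ)
    (h : ∀ F : Matrix (Fin k ⊕ Fin k) (Fin k ⊕ Fin k) ℝ, IsBlockOrthoMat F →
      F * A * Fᵀ = A) :
    ∃ α β : ℝ, A = Matrix.fromBlocks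
      (α • (1 : Matrix (Fin k) (Fin k) ℝ)) (β • (1 : Matrix (Fin k) (Fin k) ℝ))
      (β • (1 : Matrix (Fin k) (Fin k) ℝ)) (α • (1 : Matrix (Fin k) (Fin k) ℝ)) := by
  set P := A.toBlocks₁₁ with hP
  set Q := A.toBlocks₁₂ with hQ
  set R := A.toBlocks₂₁ with hR
  set S := A.toBlocks₂₂ with hS
  have hA : A = fromBlocks P Q R S := (fromBlocks_toBlocks A).symm
  have key1 : ∀ E : Matrix (Fin k) (Fin k) ℝ, IsOrthoMat E →
      E * P * Eᵀ = P ∧ E * Q * Eᵀ = Q ∧ E * R * Eᵀ = R ∧ E * S * Eᵀ = S := by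
    intro E hE
    have h1 := h _ ⟨E, hE, Or.inl rfl⟩
    rw [hA, fromBlocks_transpose, fromBlocks_multiply, fromBlocks_multiply] at h1
    simp only [Matrix.zero_mul, Matrix.mul_zero, add_zero, zero_add, transpose_zero] at h1
    exact blocks_inj h1
  have hone : IsOrthoMat (1 : Matrix (Fin k) (Fin k) ℝ) := by
    constructor <;> simp
  have key2 := h _ ⟨1, hone, Or.inr rfl⟩
  rw [hA, fromBlocks_transpose, fromBlocks_multiply, fromBlocks_multiply] at key2
  simp only [Matrix.zero_mul, Matrix.mul_zero, add_zero, zero_add, transpose_zero,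
    transpose_one, Matrix.one_mul, Matrix.mul_one] at key2
  obtain ⟨hSP, hRQ, hQR, hPS⟩ := blocks_inj key2
  obtain ⟨α, hα⟩ := scalar_of_conj hk P (fun E hE => (key1 E hE).1)
  obtain ⟨β, hβ⟩ := scalar_of_conj hk Q (fun E hE => (key1 E hE).2.1)
  exact ⟨α, β, by rw [hA, hα, hβ, ← hQR, hβ, hSP, hα]⟩
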